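/- Let r_1 > r_2 > r_3 > r_4 ≥ 2 be pairwise coprime prime powers with ∑_{k=1}^4 (r_k − 1/r_k) < 24 and r_1 ≥ 11. Then r_1·r_2·r_3·r_4 · (24 − ∑_{k=1}^4 (r_k − 1/r_k)) < 2489. -/

import Mathlib

theorem stmt_9 (r₁ r₂ r₃ r₄ : ℕ)
    (hpp₁ : IsPrimePow r₁) (hpp₂ : IsPrimePow r₂) (hpp₃ : IsPrimePow r₃)
    (hpp₄ : IsPrimePow r₄)
    (h₁₂ : Nat.Coprime r₁ r₂) (h₁₃ : Nat.Coprime r₁ r₃) (h₁₄ : Nat.Coprime r₁ r₄)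
    (h₂₃ : Nat.Coprime r₂ r₃) (h₂₄ : Nat.Coprime r₂ r₄) (h₃₄ : Nat.Coprime r₃ r₄)
    (hgt₁ : r₁ > r₂) (hgt₂ : r₂ > r₃) (hgt₃ : r₃ > r₄) (hge : r₄ ≥ 2)
    (hsum : ((r₁ : ℚ) - 1 / r₁) + ((r₂ : ℚ) - 1 / r₂) + ((r₃ : ℚ) - 1 / r₃)
        + ((r₄ : ℚ) - 1 / r₄) < 24)
    (h11 : 11 ≤ r₁) :
    (r₁ * r₂ * r₃ * r₄ : ℚ) *
        (24 - (((r₁ : ℚ) - 1 / r₁) + ((r₂ : ℚ) - 1 / r₂) + ((r₃ : ℚ) - 1 / r₃)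
          + ((r₄ : ℚ) - 1 / r₄))) < 2489 := by
  have hb4 : 2 ≤ r₄ := hge
  have hb3 : 3 ≤ r₃ := by omega
  have hb2 : 4 ≤ r₂ := by omega
  have e1 : (1:ℚ)/r₁ ≤ 1 := by
    rw [div_le_one (by positivity)]; exact_mod_cast by omega
  have e2 : (1:ℚ)/r₂ ≤ 1 := by
    rw [div_le_one (by positivity)]; exact_mod_cast by omega
  have e3 : (1:ℚ)/r₃ ≤ 1 := by
    rw [div_le_one (by positivity)]; exact_mod_cast by omega
  have e4 : (1:ℚ)/r₄ ≤ 1 := by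
    rw [div_le_one (by positivity)]; exact_mod_cast by omega
  have hq : (r₁:ℚ) + r₂ + r₃ + r₄ < 28 := by linarith
  have hn : r₁ + r₂ + r₃ + r₄ < 28 := by
    have h : ((r₁ + r₂ + r₃ + r₄ : ℕ) : ℚ) < 28 := by push_cast; linarith
    exact_mod_cast h
  have hu1 : r₁ ≤ 18 := by omega
  have hu2 : r₂ ≤ 11 := by omega
  have hu3 : r₃ ≤ 10 := by omega
  clear hq e1 e2 e3 e4
  interval_cases r₁ <;>
    first
    | exact absurd hpp₁ (by decide)
    | (interval_cases r₂ <;>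
        first
        | exact absurd hpp₂ (by decide)
        | exact absurd h₁₂ (by decide)
        | (interval_cases r₃ <;>
            first
            | exact absurd hpp₃ (by decide)
            | exact absurd h₁₃ (by decide)
            | exact absurd h₂₃ (by decide)
            | (interval_cases r₄ <;>
                first
                | exact absurd hpp₄ (by decide)
                | exact absurd h₁₄ (by decide)
                | exact absurd h₂₄ (by decide)
                | exact absurd h₃₄ (by decide)
                | (norm_num at hsum; done)
                | norm_num at hsum ⊢)))
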